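/- arXiv:2012.02838 — 6 statements merged into one kernel-verified Lean document; each statement's English description precedes it below -/
import Mathlib

section
/- Let M be a symmetric positive semidefinite d×d matrix, R a symmetric positive definite m×m matrix, B a d×m matrix, and γ > 0 such that γ²I − M is positive definite. Then the matrix Δ := I + B R⁻¹ Bᵀ M − γ⁻² M is invertible. -/
open Matrix

lemma posDef_smul' {n : ℕ} {A : Matrix (Fin n) (Fin n) ℝ} (hA : A.PosDef) {c : ℝ}
    (hc : 0 < c) : (c • A).PosDef := by
  refine ⟨by rw [Matrix.IsHermitian, Matrix.conjTranspose_smul, hA.1.eq]; simp, fun x hx => ?_⟩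
  exact (hA.smul hc).2 hx

theorem delta_invertible (d m : ℕ)
    (M : Matrix (Fin d) (Fin d) ℝ) (hM : M.PosSemidef)
    (R : Matrix (Fin m) (Fin m) ℝ) (hR : R.PosDef)
    (B : Matrix (Fin d) (Fin m) ℝ)
    (γ : ℝ) (hγ : 0 < γ)
    (hγM : (γ ^ 2 • (1 : Matrix (Fin d) (Fin d) ℝ) - M).PosDef) :
    IsUnit ((1 : Matrix (Fin d) (Fin d) ℝ) + B * R⁻¹ * Bᵀ * M - (γ ^ 2)⁻¹ • M) := by
  obtain ⟨S, hSS, hSH0⟩ : ∃ S : Matrix (Fin d) (Fin d) ℝ, S * S = M ∧ Sᴴ = S := by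
    open scoped MatrixOrder Matrix.Norms.L2Operator in
    exact ⟨CFC.sqrt M, CFC.sqrt_mul_sqrt_self M hM.nonneg, (CFC.sqrt_nonneg M).posSemidef.isHermitian.eq⟩
  have hγ2 : (0:ℝ) < γ ^ 2 := by positivity
  -- N := B * R⁻¹ * Bᵀ is PSD
  have hRinv : (R⁻¹).PosDef := Matrix.posDef_inv_iff.mpr hR
  have hN : (B * R⁻¹ * Bᵀ).PosSemidef := by
    have := hRinv.posSemidef.mul_mul_conjTranspose_same B
    simpa [Matrix.conjTranspose_eq_transpose_of_trivial] using this
  -- rewrite Δ = 1 + ((N - c•1) * S) * S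
  have key : (1 : Matrix (Fin d) (Fin d) ℝ) + B * R⁻¹ * Bᵀ * M - (γ ^ 2)⁻¹ • M
      = 1 + ((B * R⁻¹ * Bᵀ - (γ ^ 2)⁻¹ • 1) * S) * S := by
    simp only [Matrix.sub_mul, Matrix.smul_mul, Matrix.one_mul, Matrix.mul_assoc, hSS]
    abel
  rw [key, Matrix.isUnit_iff_isUnit_det, Matrix.det_one_add_mul_comm]
  -- 1 + S * ((N - c•1) * S) = c•(γ²•1 - M) + S*N*S  is PosDef
  have key2 : (1 : Matrix (Fin d) (Fin d) ℝ) + S * ((B * R⁻¹ * Bᵀ - (γ ^ 2)⁻¹ • 1) * S)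
      = (γ ^ 2)⁻¹ • (γ ^ 2 • (1 : Matrix (Fin d) (Fin d) ℝ) - M)
        + S * (B * R⁻¹ * Bᵀ) * S := by
    simp only [Matrix.sub_mul, Matrix.mul_sub, Matrix.smul_mul, Matrix.mul_smul,
      Matrix.one_mul, Matrix.mul_assoc, hSS, smul_sub, smul_smul,
      inv_mul_cancel₀ hγ2.ne', one_smul]
    abel
  have hPD : ((1 : Matrix (Fin d) (Fin d) ℝ)
      + S * ((B * R⁻¹ * Bᵀ - (γ ^ 2)⁻¹ • 1) * S)).PosDef := by
    rw [key2]
    refine Matrix.PosDef.add_posSemidef (posDef_smul' hγM (by positivity)) ?_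
    have := hN.mul_mul_conjTranspose_same S
    have hSH : Sᴴ = S := hSH0
    rw [hSH] at this
    simpa [Matrix.mul_assoc] using this
  exact hPD.det_pos.ne'.isUnit
end

section
/- Let M ⪰ 0 symmetric, R ≻ 0 symmetric, γ > 0 with γ²I − M ≻ 0, and define Δ = I + BR⁻¹BᵀM − γ⁻²M (invertible). Then the pair u* = −R⁻¹BᵀMΔ⁻¹Ax, d* = γ⁻²MΔ⁻¹Ax is a saddle point of f(u,d) = uᵀRu − γ²dᵀd + (Ax+Bu+d)ᵀM(Ax+Bu+d): for all u, d one has f(u*, d) ≤ f(u*, d*) ≤ f(u, d*). -/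
open Matrix

private lemma mulVec_dot_swap' {d k : ℕ} (S : Matrix (Fin d) (Fin k) ℝ) (a : Fin k → ℝ) (b : Fin d → ℝ) :
    S.mulVec a ⬝ᵥ b = a ⬝ᵥ Sᵀ.mulVec b := by
  rw [dotProduct_comm, dotProduct_mulVec, ← mulVec_transpose, dotProduct_comm]

private lemma quad_expand {n : ℕ} (M : Matrix (Fin n) (Fin n) ℝ) (hMs : Mᵀ = M)
    (a b : Fin n → ℝ) :
    (a + b) ⬝ᵥ M.mulVec (a + b)
      = a ⬝ᵥ M.mulVec a + 2 * (b ⬝ᵥ M.mulVec a) + b ⬝ᵥ M.mulVec b := by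
  have hsw : a ⬝ᵥ M.mulVec b = b ⬝ᵥ M.mulVec a := by
    rw [dotProduct_mulVec a, ← mulVec_transpose, hMs, dotProduct_comm]
  rw [Matrix.mulVec_add, dotProduct_add, add_dotProduct, add_dotProduct, hsw]
  ring

open scoped MatrixOrder in
private lemma delta_isUnit' (d m : ℕ) (B : Matrix (Fin d) (Fin m) ℝ)
    (R : Matrix (Fin m) (Fin m) ℝ) (hR : R.PosDef)
    (M : Matrix (Fin d) (Fin d) ℝ) (hM : M.PosSemidef)
    (γ : ℝ) (hγ : 0 < γ)
    (hγM : (γ ^ 2 • (1 : Matrix (Fin d) (Fin d) ℝ) - M).PosDef) :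
    IsUnit ((1 : Matrix (Fin d) (Fin d) ℝ) + B * R⁻¹ * Bᵀ * M - (γ ^ 2)⁻¹ • M) := by
  set Δ := (1 : Matrix (Fin d) (Fin d) ℝ) + B * R⁻¹ * Bᵀ * M - (γ ^ 2)⁻¹ • M with hΔ
  set P := B * R⁻¹ * Bᵀ with hP
  have hPpsd : P.PosSemidef := by
    rw [hP]
    have := (hR.inv.posSemidef).mul_mul_conjTranspose_same B
    simpa using this
  set S := CFC.sqrt M with hS
  have hSS : S * S = M := CFC.sqrt_mul_sqrt_self M hM.nonneg
  have hSsym : Sᵀ = S := by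
    have := (CFC.sqrt_nonneg M).posSemidef.1
    rwa [IsHermitian, conjTranspose_eq_transpose_of_trivial] at this
  have hγ2 : (0:ℝ) < γ ^ 2 := by positivity
  have key : ∀ z : Fin d → ℝ, Δ.mulVec z = 0 → z = 0 := by
    intro z hz
    set y := M.mulVec z with hy
    have hz' : z + P.mulVec y - (γ ^ 2)⁻¹ • y = 0 := by
      have : Δ.mulVec z = z + P.mulVec y - (γ ^ 2)⁻¹ • y := by
        simp [hΔ, Matrix.sub_mulVec, Matrix.add_mulVec, Matrix.smul_mulVec,
          Matrix.mul_assoc, ← Matrix.mulVec_mulVec, hy]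
      rw [← this, hz]
    have hdot : y ⬝ᵥ z + y ⬝ᵥ P.mulVec y - (γ ^ 2)⁻¹ * (y ⬝ᵥ y) = 0 := by
      have := congrArg (fun w => y ⬝ᵥ w) hz'
      simpa [dotProduct_add, dotProduct_sub, dotProduct_smul, smul_eq_mul] using this
    set w := S.mulVec z with hw
    have hySw : y = S.mulVec w := by
      rw [hy, hw, Matrix.mulVec_mulVec, hSS]
    have hyz : y ⬝ᵥ z = w ⬝ᵥ w := by
      rw [hySw, mulVec_dot_swap', hSsym, ← hw]
    have hyy : y ⬝ᵥ y = w ⬝ᵥ M.mulVec w := by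
      rw [hySw, mulVec_dot_swap', hSsym, Matrix.mulVec_mulVec, hSS]
    have hterm1 : w ⬝ᵥ (γ ^ 2 • (1 : Matrix (Fin d) (Fin d) ℝ) - M).mulVec w
        = γ ^ 2 * (y ⬝ᵥ z) - y ⬝ᵥ y := by
      rw [Matrix.sub_mulVec, dotProduct_sub, Matrix.smul_mulVec, one_mulVec,
        dotProduct_smul, smul_eq_mul, hyz, hyy]
    have h1nn : 0 ≤ γ ^ 2 * (y ⬝ᵥ z) - y ⬝ᵥ y := hterm1 ▸ (by simpa using hγM.posSemidef.dotProduct_mulVec_nonneg w)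
    have h2nn : 0 ≤ y ⬝ᵥ P.mulVec y := by simpa using hPpsd.dotProduct_mulVec_nonneg y
    have hdot2 : γ ^ 2 * (y ⬝ᵥ z) + γ ^ 2 * (y ⬝ᵥ P.mulVec y) - y ⬝ᵥ y = 0 := by
      have h2 : γ ^ 2 * (y ⬝ᵥ z) + γ ^ 2 * (y ⬝ᵥ P.mulVec y) - y ⬝ᵥ y
          = γ ^ 2 * (y ⬝ᵥ z + y ⬝ᵥ P.mulVec y - (γ ^ 2)⁻¹ * (y ⬝ᵥ y)) := by
        field_simp
      rw [h2, hdot, mul_zero]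
    have h1z : γ ^ 2 * (y ⬝ᵥ z) - y ⬝ᵥ y = 0 := by
      nlinarith [mul_nonneg hγ2.le h2nn]
    have hwz : w = 0 := by
      by_contra hne
      have := hγM.dotProduct_mulVec_pos hne
      simp only [star_trivial] at this
      rw [hterm1, h1z] at this
      exact lt_irrefl _ this
    have hyzero : y = 0 := by rw [hySw, hwz, mulVec_zero]
    rw [hyzero] at hz'
    simpa using hz'
  rw [← Matrix.mulVec_injective_iff_isUnit]
  intro a b hab
  have h0 : Δ.mulVec (a - b) = 0 := by rw [Matrix.mulVec_sub, hab, sub_self]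
  exact sub_eq_zero.mp (key _ h0)

theorem saddle_point_property (d m : ℕ) (x : Fin d → ℝ)
    (A : Matrix (Fin d) (Fin d) ℝ) (B : Matrix (Fin d) (Fin m) ℝ)
    (R : Matrix (Fin m) (Fin m) ℝ) (hR : R.PosDef)
    (M : Matrix (Fin d) (Fin d) ℝ) (hM : M.PosSemidef)
    (γ : ℝ) (hγ : 0 < γ)
    (hγM : (γ ^ 2 • (1 : Matrix (Fin d) (Fin d) ℝ) - M).PosDef)
    (Δ : Matrix (Fin d) (Fin d) ℝ)
    (hΔ : Δ = (1 : Matrix (Fin d) (Fin d) ℝ) + B * R⁻¹ * Bᵀ * M - (γ ^ 2)⁻¹ • M)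
    (f : (Fin m → ℝ) → (Fin d → ℝ) → ℝ)
    (hf : ∀ u dvec, f u dvec = u ⬝ᵥ R.mulVec u - γ ^ 2 * (dvec ⬝ᵥ dvec) +
      (A.mulVec x + B.mulVec u + dvec) ⬝ᵥ M.mulVec (A.mulVec x + B.mulVec u + dvec))
    (ustar : Fin m → ℝ) (hustar : ustar = -(R⁻¹ * Bᵀ * M * Δ⁻¹ * A).mulVec x)
    (dstar : Fin d → ℝ) (hdstar : dstar = (γ ^ 2)⁻¹ • (M * Δ⁻¹ * A).mulVec x) :
    ∀ u : Fin m → ℝ, ∀ dvec : Fin d → ℝ,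
      f ustar dvec ≤ f ustar dstar ∧ f ustar dstar ≤ f u dstar := by
  have hγ2 : (0:ℝ) < γ ^ 2 := by positivity
  have hU : IsUnit Δ := hΔ ▸ delta_isUnit' d m B R hR M hM γ hγ hγM
  have hΔinv : Δ * Δ⁻¹ = 1 := Matrix.mul_nonsing_inv Δ ((Matrix.isUnit_iff_isUnit_det Δ).mp hU)
  have hRinv : R * R⁻¹ = 1 :=
    Matrix.mul_nonsing_inv R ((Matrix.isUnit_iff_isUnit_det R).mp hR.isUnit)
  have hMsym : Mᵀ = M := by
    have := hM.1
    rwa [IsHermitian, conjTranspose_eq_transpose_of_trivial] at this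
  have hRsym : Rᵀ = R := by
    have := hR.1
    rwa [IsHermitian, conjTranspose_eq_transpose_of_trivial] at this
  set z : Fin d → ℝ := (Δ⁻¹ * A).mulVec x with hzdef
  -- the matrix identity
  have h1 : Δ - B * R⁻¹ * Bᵀ * M + (γ ^ 2)⁻¹ • M = 1 := by rw [hΔ]; abel
  have hid : (1 : Matrix (Fin d) (Fin d) ℝ) - B * R⁻¹ * Bᵀ * M * Δ⁻¹
      + (γ ^ 2)⁻¹ • (M * Δ⁻¹) = Δ⁻¹ := by
    have h2 := congrArg (· * Δ⁻¹) h1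
    simpa [add_mul, sub_mul, Matrix.smul_mul, hΔinv, Matrix.mul_assoc] using h2
  -- key vector identities
  have hz : A.mulVec x + B.mulVec ustar + dstar = z := by
    rw [hustar, hdstar, Matrix.mulVec_neg, Matrix.mulVec_mulVec, hzdef]
    have h3 := congrArg (fun N => N.mulVec x) (congrArg (· * A) hid)
    simp only [add_mul, sub_mul, one_mul, Matrix.smul_mul, Matrix.add_mulVec,
      Matrix.sub_mulVec, Matrix.smul_mulVec, Matrix.mul_assoc] at h3 ⊢
    rw [← h3]
    abel
  have hcross : R.mulVec ustar + (Bᵀ * M).mulVec z = 0 := by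
    rw [hustar, hzdef, Matrix.mulVec_neg, Matrix.mulVec_mulVec, Matrix.mulVec_mulVec]
    rw [show R * (R⁻¹ * Bᵀ * M * Δ⁻¹ * A) = Bᵀ * M * (Δ⁻¹ * A) by
      rw [show R⁻¹ * Bᵀ * M * Δ⁻¹ * A = R⁻¹ * (Bᵀ * M * (Δ⁻¹ * A)) by
        simp [Matrix.mul_assoc], ← Matrix.mul_assoc, hRinv, Matrix.one_mul]]
    rw [show Bᵀ * M * (Δ⁻¹ * A) = Bᵀ * M * Δ⁻¹ * A by simp [Matrix.mul_assoc]]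
    simp
  have hMz : M.mulVec z = γ ^ 2 • dstar := by
    rw [hdstar, hzdef, smul_smul, mul_inv_cancel₀ hγ2.ne', one_smul,
      Matrix.mulVec_mulVec, Matrix.mul_assoc]
  intro u dvec
  constructor
  · -- d direction : f ustar dvec ≤ f ustar dstar
    set e := dvec - dstar with hedef
    have hd : dvec = dstar + e := by rw [hedef]; abel
    have e2 : A.mulVec x + B.mulVec ustar + dvec = z + e := by
      rw [hd, ← hz]; abel
    have e3 : (z + e) ⬝ᵥ M.mulVec (z + e)
        = z ⬝ᵥ M.mulVec z + 2 * (e ⬝ᵥ M.mulVec z) + e ⬝ᵥ M.mulVec e :=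
      quad_expand M hMsym z e
    have e4 : dvec ⬝ᵥ dvec = dstar ⬝ᵥ dstar + 2 * (e ⬝ᵥ dstar) + e ⬝ᵥ e := by
      rw [hd, dotProduct_add, add_dotProduct, add_dotProduct, dotProduct_comm dstar e]
      ring
    have e5 : e ⬝ᵥ M.mulVec z = γ ^ 2 * (e ⬝ᵥ dstar) := by
      rw [hMz, dotProduct_smul, smul_eq_mul]
    have e6 : 0 ≤ γ ^ 2 * (e ⬝ᵥ e) - e ⬝ᵥ M.mulVec e := by
      have := hγM.posSemidef.dotProduct_mulVec_nonneg e
      simp only [star_trivial] at this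
      rwa [Matrix.sub_mulVec, dotProduct_sub, Matrix.smul_mulVec, one_mulVec,
        dotProduct_smul, smul_eq_mul] at this
    rw [hf, hf, hz, e2, e3, e4]
    nlinarith [e5, e6]
  · -- u direction : f ustar dstar ≤ f u dstar
    set w := u - ustar with hwdef
    have hu : u = ustar + w := by rw [hwdef]; abel
    have e2 : A.mulVec x + B.mulVec u + dstar = z + B.mulVec w := by
      rw [hu, Matrix.mulVec_add, ← hz]; abel
    have e3 : (z + B.mulVec w) ⬝ᵥ M.mulVec (z + B.mulVec w)
        = z ⬝ᵥ M.mulVec z + 2 * (B.mulVec w ⬝ᵥ M.mulVec z) + B.mulVec w ⬝ᵥ M.mulVec (B.mulVec w) :=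
      quad_expand M hMsym z (B.mulVec w)
    have e1 : u ⬝ᵥ R.mulVec u
        = ustar ⬝ᵥ R.mulVec ustar + 2 * (w ⬝ᵥ R.mulVec ustar) + w ⬝ᵥ R.mulVec w := by
      rw [hu]; exact quad_expand R hRsym ustar w
    have ecross : w ⬝ᵥ R.mulVec ustar + B.mulVec w ⬝ᵥ M.mulVec z = 0 := by
      rw [mulVec_dot_swap', Matrix.mulVec_mulVec, ← dotProduct_add, hcross, dotProduct_zero]
    have hRnn : 0 ≤ w ⬝ᵥ R.mulVec w := by simpa using hR.posSemidef.dotProduct_mulVec_nonneg w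
    have hMnn : 0 ≤ B.mulVec w ⬝ᵥ M.mulVec (B.mulVec w) := by simpa using hM.dotProduct_mulVec_nonneg (B.mulVec w)
    rw [hf, hf, hz, e2, e3, e1]
    nlinarith [ecross]
end

section
/- With M ⪰ 0 symmetric, R ≻ 0 symmetric, γ > 0, γ²I − M ≻ 0, and Δ = I + BR⁻¹BᵀM − γ⁻²M, the saddle-point value of f(u,d) = uᵀRu − γ²dᵀd + (Ax+Bu+d)ᵀM(Ax+Bu+d) equals xᵀ(AᵀMΔ⁻¹A)x; i.e., f(u*,d*) = xᵀ AᵀMΔ⁻¹A x for u* = −R⁻¹BᵀMΔ⁻¹Ax and d* = γ⁻²MΔ⁻¹Ax. -/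
open Matrix

theorem saddle_point_value (d m : ℕ) (x : Fin d → ℝ)
    (A : Matrix (Fin d) (Fin d) ℝ) (B : Matrix (Fin d) (Fin m) ℝ)
    (R : Matrix (Fin m) (Fin m) ℝ) (hR : R.PosDef)
    (M : Matrix (Fin d) (Fin d) ℝ) (hM : M.PosSemidef)
    (γ : ℝ) (hγ : 0 < γ)
    (hγM : (γ ^ 2 • (1 : Matrix (Fin d) (Fin d) ℝ) - M).PosDef)
    (Δ : Matrix (Fin d) (Fin d) ℝ)
    (hΔ : Δ = (1 : Matrix (Fin d) (Fin d) ℝ) + B * R⁻¹ * Bᵀ * M - (γ ^ 2)⁻¹ • M)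
    (f : (Fin m → ℝ) → (Fin d → ℝ) → ℝ)
    (hf : ∀ u dvec, f u dvec = u ⬝ᵥ R.mulVec u - γ ^ 2 * (dvec ⬝ᵥ dvec) +
      (A.mulVec x + B.mulVec u + dvec) ⬝ᵥ M.mulVec (A.mulVec x + B.mulVec u + dvec))
    (ustar : Fin m → ℝ) (hustar : ustar = -(R⁻¹ * Bᵀ * M * Δ⁻¹ * A).mulVec x)
    (dstar : Fin d → ℝ) (hdstar : dstar = (γ ^ 2)⁻¹ • (M * Δ⁻¹ * A).mulVec x) :
    f ustar dstar = x ⬝ᵥ (Aᵀ * M * Δ⁻¹ * A).mulVec x := by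
  have hγ2 : (γ : ℝ) ^ 2 ≠ 0 := by positivity
  set P : Matrix (Fin d) (Fin d) ℝ := γ ^ 2 • (1 : Matrix (Fin d) (Fin d) ℝ) - M with hP
  -- square root of M
  set s : Matrix (Fin d) (Fin d) ℝ := (by open scoped MatrixOrder in exact CFC.sqrt M) with hs
  have hss : s * s = M := by open scoped MatrixOrder in exact CFC.sqrt_mul_sqrt_self M hM.nonneg
  have hsT : sᵀ = s := by
    have : s.IsHermitian := by open scoped MatrixOrder in exact (CFC.sqrt_nonneg M).posSemidef.isHermitian
    rwa [Matrix.IsHermitian, conjTranspose_eq_transpose_of_trivial] at this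
  have hMT : Mᵀ = M := by
    have := hM.isHermitian
    rwa [Matrix.IsHermitian, conjTranspose_eq_transpose_of_trivial] at this
  have hMs : M * s = s * M := by
    calc M * s = s * s * s := by rw [hss]
    _ = s * (s * s) := by rw [Matrix.mul_assoc]
    _ = s * M := by rw [hss]
  have hPs : P * s = s * P := by
    simp only [hP, Matrix.sub_mul, Matrix.mul_sub, Matrix.smul_mul, Matrix.mul_smul,
      Matrix.one_mul, Matrix.mul_one, hMs]
  have hMP : M * P = s * P * s := by
    calc M * P = s * (s * P) := by rw [← Matrix.mul_assoc, hss]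
    _ = s * (P * s) := by rw [hPs]
    _ = s * P * s := by rw [Matrix.mul_assoc]
  have hMPpsd : (M * P).PosSemidef := by
    rw [hMP]
    have := hγM.posSemidef.mul_mul_conjTranspose_same s
    rwa [conjTranspose_eq_transpose_of_trivial, hsT] at this
  have hRinv : (R⁻¹).PosDef := hR.inv
  have hSpsd : (M * (B * R⁻¹ * Bᵀ) * M).PosSemidef := by
    have h1 : (B * R⁻¹ * Bᵀ).PosSemidef := by
      have := hRinv.posSemidef.mul_mul_conjTranspose_same B
      rwa [conjTranspose_eq_transpose_of_trivial] at this
    have := h1.conjTranspose_mul_mul_same M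
    rwa [conjTranspose_eq_transpose_of_trivial, hMT] at this
  -- decomposition of M * Δ
  have hMΔ : M * Δ = (γ ^ 2)⁻¹ • (M * P) + M * (B * R⁻¹ * Bᵀ) * M := by
    rw [hΔ, hP]
    simp only [Matrix.mul_add, Matrix.mul_sub, Matrix.mul_one, Matrix.mul_smul, smul_sub,
      smul_smul, inv_mul_cancel₀ hγ2, one_smul, Matrix.mul_assoc]
    abel
  -- Δ is invertible
  have hker : ∀ v : Fin d → ℝ, Δ *ᵥ v = 0 → v = 0 := by
    intro v hv
    have key : v ⬝ᵥ (M * Δ) *ᵥ v = 0 := by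
      rw [← mulVec_mulVec, hv, mulVec_zero, dotProduct_zero]
    rw [hMΔ, add_mulVec, dotProduct_add, smul_mulVec, dotProduct_smul,
      smul_eq_mul] at key
    have t1 : 0 ≤ v ⬝ᵥ (M * P) *ᵥ v := by
      have := hMPpsd.dotProduct_mulVec_nonneg v
      simpa using this
    have t2 : 0 ≤ v ⬝ᵥ (M * (B * R⁻¹ * Bᵀ) * M) *ᵥ v := by
      have := hSpsd.dotProduct_mulVec_nonneg v
      simpa using this
    have hγ2pos : 0 < ((γ : ℝ) ^ 2)⁻¹ := by positivity
    have h10 : v ⬝ᵥ (M * P) *ᵥ v = 0 := by nlinarith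
    -- from t1 = 0 deduce s *ᵥ v = 0
    have hquad : (s *ᵥ v) ⬝ᵥ P *ᵥ (s *ᵥ v) = 0 := by
      have : v ⬝ᵥ (M * P) *ᵥ v = (s *ᵥ v) ⬝ᵥ P *ᵥ (s *ᵥ v) := by
        rw [hMP, ← mulVec_mulVec, ← mulVec_mulVec, dotProduct_mulVec v s,
          ← mulVec_transpose, hsT, dotProduct_mulVec, dotProduct_mulVec]
      rw [← this, h10]
    have hsv : s *ᵥ v = 0 := by
      by_contra hne
      have := hγM.dotProduct_mulVec_pos hne
      rw [star_trivial] at this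
      exact absurd hquad (ne_of_gt this)
    have hMv : M *ᵥ v = 0 := by
      rw [← hss, ← mulVec_mulVec, hsv, mulVec_zero]
    rw [hΔ, sub_mulVec, add_mulVec, one_mulVec, smul_mulVec,
      ← mulVec_mulVec, hMv] at hv
    simpa using hv
  have hΔunit : IsUnit Δ := by
    rw [← Matrix.mulVec_injective_iff_isUnit]
    rw [← Matrix.coe_mulVecLin, ← LinearMap.ker_eq_bot, Matrix.ker_mulVecLin_eq_bot_iff]
    exact hker
  have hΔinv : Δ * Δ⁻¹ = 1 :=
    Matrix.mul_nonsing_inv Δ ((Matrix.isUnit_iff_isUnit_det Δ).mp hΔunit)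
  have hRinv1 : R * R⁻¹ = 1 :=
    Matrix.mul_nonsing_inv R ((Matrix.isUnit_iff_isUnit_det R).mp hR.isUnit)
  -- main computation
  obtain ⟨y, hy⟩ : ∃ y, Δ⁻¹ *ᵥ (A *ᵥ x) = y := ⟨_, rfl⟩
  have hΔy : Δ *ᵥ y = A *ᵥ x := by rw [← hy, mulVec_mulVec, hΔinv, one_mulVec]
  obtain ⟨w, hw⟩ : ∃ w, M *ᵥ y = w := ⟨_, rfl⟩
  obtain ⟨z, hz⟩ : ∃ z, Bᵀ *ᵥ w = z := ⟨_, rfl⟩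
  have hustar2 : ustar = -(R⁻¹ *ᵥ z) := by
    rw [hustar, ← hz, ← hw, ← hy]
    simp only [mulVec_mulVec, Matrix.mul_assoc]
  have hdstar2 : dstar = (γ ^ 2)⁻¹ • w := by
    rw [hdstar, ← hw, ← hy]
    simp only [mulVec_mulVec, Matrix.mul_assoc]
  have hRu : R *ᵥ ustar = -z := by
    rw [hustar2, mulVec_neg, mulVec_mulVec, hRinv1, one_mulVec]
  have hBu : B *ᵥ ustar = -((B * R⁻¹) *ᵥ z) := by
    rw [hustar2, mulVec_neg, mulVec_mulVec]
  have hΔyexp : Δ *ᵥ y = y + (B * R⁻¹) *ᵥ z - (γ ^ 2)⁻¹ • w := by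
    rw [hΔ, sub_mulVec, add_mulVec, one_mulVec, smul_mulVec,
      show (B * R⁻¹ * Bᵀ * M) *ᵥ y = (B * R⁻¹) *ᵥ z by
        rw [← hz, ← hw, mulVec_mulVec, mulVec_mulVec, Matrix.mul_assoc, Matrix.mul_assoc],
      hw]
  have hsum : A *ᵥ x + B *ᵥ ustar + dstar = y := by
    rw [hBu, hdstar2, ← hΔy, hΔyexp]; abel
  have hrhs : x ⬝ᵥ (Aᵀ * M * Δ⁻¹ * A) *ᵥ x = (A *ᵥ x) ⬝ᵥ w := by
    rw [show (Aᵀ * M * Δ⁻¹ * A) *ᵥ x = Aᵀ *ᵥ w by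
        rw [← hw, ← hy]; simp only [mulVec_mulVec, Matrix.mul_assoc],
      dotProduct_mulVec, vecMul_transpose]
  have hBzw : ((B * R⁻¹) *ᵥ z) ⬝ᵥ w = (R⁻¹ *ᵥ z) ⬝ᵥ z := by
    rw [← mulVec_mulVec, dotProduct_comm, dotProduct_mulVec, ← mulVec_transpose, hz,
      dotProduct_comm]
  rw [hf, hsum, hrhs, ← hΔy, hΔyexp, hRu, hustar2, hdstar2, hw]
  simp only [sub_dotProduct, add_dotProduct, smul_dotProduct, dotProduct_smul,
    neg_dotProduct, dotProduct_neg, neg_neg, smul_eq_mul]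
  rw [hBzw]
  field_simp
  ring
end

section
/- If Q is symmetric positive semidefinite, M is symmetric positive semidefinite, R is symmetric positive definite, γ > 0, and γ²I − M ≻ 0, then the Riccati update M' := Q + Aᵀ M Δ⁻¹ A with Δ = I + BR⁻¹BᵀM − γ⁻²M is symmetric positive semidefinite. -/
open Matrix

private lemma smul_posDef' {n : ℕ} {N : Matrix (Fin n) (Fin n) ℝ} (hN : N.PosDef)
    {c : ℝ} (hc : 0 < c) : (c • N).PosDef := by
  refine posDef_iff_dotProduct_mulVec.mpr ⟨?_, fun x hx => ?_⟩
  · unfold Matrix.IsHermitian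
    rw [conjTranspose_smul, hN.1]
    simp
  · have := hN.dotProduct_mulVec_pos hx
    rw [smul_mulVec, dotProduct_smul]
    positivity

private lemma dp_helper {n : ℕ} (X Y : Matrix (Fin n) (Fin n) ℝ) (u v : Fin n → ℝ) :
    (X *ᵥ u) ⬝ᵥ (Y *ᵥ v) = u ⬝ᵥ ((Xᵀ * Y) *ᵥ v) := by
  calc (X *ᵥ u) ⬝ᵥ (Y *ᵥ v)
      = (u ᵥ* Xᵀ) ⬝ᵥ (Y *ᵥ v) := by rw [vecMul_transpose]
    _ = u ⬝ᵥ (Xᵀ *ᵥ (Y *ᵥ v)) := (dotProduct_mulVec u Xᵀ (Y *ᵥ v)).symm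
    _ = u ⬝ᵥ ((Xᵀ * Y) *ᵥ v) := by rw [mulVec_mulVec]

theorem riccati_update_psd (d m : ℕ)
    (A : Matrix (Fin d) (Fin d) ℝ) (B : Matrix (Fin d) (Fin m) ℝ)
    (Q : Matrix (Fin d) (Fin d) ℝ) (hQ : Q.PosSemidef)
    (M : Matrix (Fin d) (Fin d) ℝ) (hM : M.PosSemidef)
    (R : Matrix (Fin m) (Fin m) ℝ) (hR : R.PosDef)
    (γ : ℝ) (hγ : 0 < γ)
    (hγM : (γ ^ 2 • (1 : Matrix (Fin d) (Fin d) ℝ) - M).PosDef)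
    (Δ : Matrix (Fin d) (Fin d) ℝ)
    (hΔ : Δ = (1 : Matrix (Fin d) (Fin d) ℝ) + B * R⁻¹ * Bᵀ * M - (γ ^ 2)⁻¹ • M) :
    (Q + Aᵀ * M * Δ⁻¹ * A).PosSemidef := by
  have hγ2 : (0:ℝ) < γ ^ 2 := by positivity
  set c : ℝ := (γ ^ 2)⁻¹ with hc
  have hcpos : 0 < c := by positivity
  set C : Matrix (Fin d) (Fin d) ℝ := 1 - c • M with hCdef
  set P : Matrix (Fin d) (Fin d) ℝ := B * R⁻¹ * Bᵀ with hPdef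
  have hC : C.PosDef := by
    have := smul_posDef' hγM hcpos
    have h2 : c • (γ ^ 2 • (1 : Matrix (Fin d) (Fin d) ℝ) - M) = C := by
      rw [smul_sub, smul_smul, hc, inv_mul_cancel₀ (ne_of_gt hγ2), one_smul]
    rwa [h2] at this
  have hP : P.PosSemidef := by
    have := (hR.inv.posSemidef).mul_mul_conjTranspose_same B
    rwa [conjTranspose_eq_transpose_of_trivial] at this
  have hPsymm : Pᵀ = P := by
    rw [← conjTranspose_eq_transpose_of_trivial]; exact hP.1
  have hMsymm : Mᵀ = M := by
    rw [← conjTranspose_eq_transpose_of_trivial]; exact hM.1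
  have hCsymm : Cᵀ = C := by
    rw [hCdef, transpose_sub, transpose_smul, hMsymm, transpose_one]
  have hΔ' : Δ = C + P * M := by rw [hΔ, hCdef, hPdef]; abel
  obtain ⟨S, hSsymm, hSS⟩ : ∃ S : Matrix (Fin d) (Fin d) ℝ, Sᵀ = S ∧ S * S = M :=
    by
      classical
      open scoped MatrixOrder in
      obtain ⟨X, hX, -, hXX⟩ := sub_zero M ▸
        CFC.exists_sqrt_of_isSelfAdjoint_of_quasispectrumRestricts hM.isHermitian
          (QuasispectrumRestricts.nnreal_of_nonneg hM.nonneg)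
      exact ⟨X, by rw [← conjTranspose_eq_transpose_of_trivial]; exact hX.star_eq, by rw [sub_zero] at hXX; exact hXX⟩
  have hSMS : S * M * S = M * M := by rw [← hSS]; simp only [mul_assoc]
  have key : Sᵀ * C * S = M * C := by
    rw [hSsymm, hCdef, mul_sub, sub_mul, mul_one, mul_sub, mul_one, hSS,
      mul_smul_comm, smul_mul_assoc, mul_smul_comm, hSMS]
  have hMC : (M * C).PosSemidef := by
    have := hC.posSemidef.conjTranspose_mul_mul_same S
    rwa [conjTranspose_eq_transpose_of_trivial, key] at this
  have hMPM : (M * P * M).PosSemidef := by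
    have := hP.conjTranspose_mul_mul_same M
    rwa [conjTranspose_eq_transpose_of_trivial, hMsymm] at this
  -- Δ is invertible
  have hU : IsUnit Δ := by
    rw [← mulVec_injective_iff_isUnit]
    suffices h0 : ∀ x, Δ *ᵥ x = 0 → x = 0 by
      intro a b hab
      have hz : Δ *ᵥ (a - b) = 0 := by rw [mulVec_sub, hab, sub_self]
      exact sub_eq_zero.mp (h0 _ hz)
    intro x hx
    have hexp : (0:ℝ) = x ⬝ᵥ ((M * C) *ᵥ x) + (M *ᵥ x) ⬝ᵥ (P *ᵥ (M *ᵥ x)) := by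
      have h1 : (M *ᵥ x) ⬝ᵥ (Δ *ᵥ x) = 0 := by rw [hx, dotProduct_zero]
      calc (0:ℝ) = (M *ᵥ x) ⬝ᵥ (Δ *ᵥ x) := h1.symm
        _ = (M *ᵥ x) ⬝ᵥ (C *ᵥ x) + (M *ᵥ x) ⬝ᵥ ((P * M) *ᵥ x) := by
            rw [hΔ', add_mulVec, dotProduct_add]
        _ = x ⬝ᵥ ((M * C) *ᵥ x) + (M *ᵥ x) ⬝ᵥ (P *ᵥ (M *ᵥ x)) := by
            rw [dp_helper M C x x, hMsymm, ← mulVec_mulVec, ← mulVec_mulVec]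
    have ht2 : 0 ≤ (M *ᵥ x) ⬝ᵥ (P *ᵥ (M *ᵥ x)) := by
      have := hP.dotProduct_mulVec_nonneg (M *ᵥ x); simpa using this
    have ht1 : 0 ≤ x ⬝ᵥ ((M * C) *ᵥ x) := by
      have := hMC.dotProduct_mulVec_nonneg x; simpa using this
    have ht1z : x ⬝ᵥ ((M * C) *ᵥ x) = 0 := by linarith
    have hSx : S *ᵥ x = 0 := by
      by_contra hne
      have hpos := hC.dotProduct_mulVec_pos hne
      rw [star_trivial] at hpos
      have heq : (S *ᵥ x) ⬝ᵥ (C *ᵥ (S *ᵥ x)) = x ⬝ᵥ ((M * C) *ᵥ x) := by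
        rw [mulVec_mulVec, dp_helper, ← mul_assoc, key]
      rw [heq, ht1z] at hpos
      exact lt_irrefl 0 hpos
    have hMx : M *ᵥ x = 0 := by
      rw [← hSS, ← mulVec_mulVec, hSx, mulVec_zero]
    have hCx : C *ᵥ x = 0 := by
      have h2 := hx
      rwa [hΔ', add_mulVec, ← mulVec_mulVec, hMx, mulVec_zero, add_zero] at h2
    by_contra hne
    have := hC.dotProduct_mulVec_pos hne
    rw [star_trivial, hCx, dotProduct_zero] at this
    exact lt_irrefl 0 this
  have hΔTdet : IsUnit Δᵀ.det := by
    rw [det_transpose]; exact (isUnit_iff_isUnit_det Δ).mp hU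
  have hMΔ : M * Δ = M * C + M * P * M := by rw [hΔ', mul_add, ← mul_assoc]
  have hMCcomm : M * C = C * M := by
    rw [hCdef, mul_sub, sub_mul, mul_one, one_mul, mul_smul_comm, smul_mul_assoc]
  have hΔT : Δᵀ = C + M * P := by
    rw [hΔ', transpose_add, hCsymm, transpose_mul, hPsymm, hMsymm]
  have hcomm : M * Δ = Δᵀ * M := by
    rw [hΔT, hΔ', mul_add, add_mul, ← mul_assoc, hMCcomm, mul_assoc]
  have hKeq : M * Δ⁻¹ = (Δ⁻¹)ᵀ * (M * C + M * P * M) * Δ⁻¹ := by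
    rw [← hMΔ, transpose_nonsing_inv]
    calc M * Δ⁻¹ = (Δᵀ)⁻¹ * Δᵀ * (M * Δ⁻¹) := by
          rw [nonsing_inv_mul _ hΔTdet, one_mul]
      _ = (Δᵀ)⁻¹ * (Δᵀ * M) * Δ⁻¹ := by simp only [mul_assoc]
      _ = (Δᵀ)⁻¹ * (M * Δ) * Δ⁻¹ := by rw [hcomm]
  have hK : (M * Δ⁻¹).PosSemidef := by
    rw [hKeq]
    have := (hMC.add hMPM).conjTranspose_mul_mul_same Δ⁻¹
    rwa [conjTranspose_eq_transpose_of_trivial] at this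
  have hfin : Aᵀ * M * Δ⁻¹ * A = Aᵀ * (M * Δ⁻¹) * A := by simp only [mul_assoc]
  rw [hfin]
  have hconj := hK.conjTranspose_mul_mul_same A
  rw [conjTranspose_eq_transpose_of_trivial] at hconj
  exact hQ.add hconj
end

section
/- The matrix MΔ⁻¹ with Δ = I + BR⁻¹BᵀM − γ⁻²M is symmetric whenever M is symmetric positive semidefinite, R is symmetric positive definite, γ > 0, and γ²I − M ≻ 0; that is, MΔ⁻¹ = (MΔ⁻¹)ᵀ = Δ⁻ᵀM. -/
open Matrix
open scoped MatrixOrder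

theorem M_delta_inv_symm (d m : ℕ)
    (M : Matrix (Fin d) (Fin d) ℝ) (hM : M.PosSemidef)
    (R : Matrix (Fin m) (Fin m) ℝ) (hR : R.PosDef)
    (B : Matrix (Fin d) (Fin m) ℝ)
    (γ : ℝ) (hγ : 0 < γ)
    (hγM : (γ ^ 2 • (1 : Matrix (Fin d) (Fin d) ℝ) - M).PosDef)
    (Δ : Matrix (Fin d) (Fin d) ℝ)
    (hΔ : Δ = (1 : Matrix (Fin d) (Fin d) ℝ) + B * R⁻¹ * Bᵀ * M - (γ ^ 2)⁻¹ • M) :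
    M * Δ⁻¹ = (M * Δ⁻¹)ᵀ ∧ M * Δ⁻¹ = (Δ⁻¹)ᵀ * M := by
  set S : Matrix (Fin d) (Fin d) ℝ := B * R⁻¹ * Bᵀ with hS
  set P : Matrix (Fin d) (Fin d) ℝ := γ ^ 2 • (1 : Matrix (Fin d) (Fin d) ℝ) - M with hP
  have hMsymm : Mᵀ = M := by
    rw [← conjTranspose_eq_transpose_of_trivial]; exact hM.isHermitian
  have hRsymm : Rᵀ = R := by
    rw [← conjTranspose_eq_transpose_of_trivial]; exact hR.isHermitian
  -- S is positive semidefinite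
  have hSpsd : S.PosSemidef := by
    have h := (hR.inv.posSemidef).mul_mul_conjTranspose_same B
    rw [conjTranspose_eq_transpose_of_trivial] at h
    exact h
  -- M * P = P * M
  have hMP : M * P = P * M := by
    simp [hP, Matrix.mul_sub, Matrix.sub_mul, Matrix.mul_smul, Matrix.smul_mul]
  -- M * P is positive semidefinite (via sqrt of M)
  have hQM : CFC.sqrt M * M = M * CFC.sqrt M := by
    have h : CFC.sqrt M * (CFC.sqrt M * CFC.sqrt M) = (CFC.sqrt M * CFC.sqrt M) * CFC.sqrt M := by
      rw [Matrix.mul_assoc]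
    rwa [CFC.sqrt_mul_sqrt_self M hM.nonneg] at h
  have hQcomm : CFC.sqrt M * P = P * CFC.sqrt M := by
    simp only [hP, Matrix.mul_sub, Matrix.sub_mul, Matrix.mul_smul, Matrix.smul_mul,
      Matrix.mul_one, Matrix.one_mul, hQM]
  have hMPpsd : (M * P).PosSemidef := by
    have h := hγM.posSemidef.mul_mul_conjTranspose_same (CFC.sqrt M)
    have hQH : (CFC.sqrt M)ᴴ = CFC.sqrt M := (CFC.sqrt_nonneg M).posSemidef.isHermitian
    rw [hQH] at h
    have heq : CFC.sqrt M * P * CFC.sqrt M = M * P := by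
      rw [hQcomm, Matrix.mul_assoc, CFC.sqrt_mul_sqrt_self M hM.nonneg, ← hMP]
    rwa [heq] at h
  -- Δ is invertible
  have hdet : IsUnit Δ.det := by
    rw [isUnit_iff_ne_zero]
    intro h
    obtain ⟨v, hvne, hΔv⟩ := (Matrix.exists_mulVec_eq_zero_iff).mpr h
    set y : Fin d → ℝ := M *ᵥ v with hy
    have hΔv' : v + S *ᵥ y - (γ ^ 2)⁻¹ • y = 0 := by
      rw [hΔ] at hΔv
      rwa [Matrix.sub_mulVec, Matrix.add_mulVec, Matrix.one_mulVec,
        ← Matrix.mulVec_mulVec, Matrix.smul_mulVec] at hΔv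
    -- dot the relation with y
    have hdot : y ⬝ᵥ v + y ⬝ᵥ (S *ᵥ y) - (γ ^ 2)⁻¹ * (y ⬝ᵥ y) = 0 := by
      have := congrArg (fun w => y ⬝ᵥ w) hΔv'
      simpa [dotProduct_add, dotProduct_sub, dotProduct_smul, smul_eq_mul] using this
    have hSy : 0 ≤ y ⬝ᵥ (S *ᵥ y) := by simpa using hSpsd.dotProduct_mulVec_nonneg y
    -- compute vᵀ (M P) v
    have hMPv : v ⬝ᵥ ((M * P) *ᵥ v) = γ ^ 2 * (v ⬝ᵥ y) - y ⬝ᵥ y := by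
      have h1 : (M * P) *ᵥ v = γ ^ 2 • y - M *ᵥ y := by
        rw [hMP, ← Matrix.mulVec_mulVec, hP, Matrix.sub_mulVec, Matrix.smul_mulVec,
          Matrix.one_mulVec, ← hy]
      have h2 : v ⬝ᵥ (M *ᵥ y) = y ⬝ᵥ y := by
        rw [show v ⬝ᵥ (M *ᵥ y) = (Mᵀ *ᵥ v) ⬝ᵥ y from by
          rw [Matrix.mulVec_transpose, Matrix.dotProduct_mulVec], hMsymm, ← hy]
      rw [h1, dotProduct_sub, dotProduct_smul, smul_eq_mul, h2]
    have hnonneg : 0 ≤ v ⬝ᵥ ((M * P) *ᵥ v) := by simpa using hMPpsd.dotProduct_mulVec_nonneg v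
    have hγ2 : (0:ℝ) < γ ^ 2 := by positivity
    have hvy : v ⬝ᵥ y = y ⬝ᵥ v := dotProduct_comm v y
    -- vᵀ (M P) v ≤ 0
    have hzero : v ⬝ᵥ ((M * P) *ᵥ v) = 0 := by
      have hle : v ⬝ᵥ ((M * P) *ᵥ v) ≤ 0 := by
        rw [hMPv, hvy]
        have : y ⬝ᵥ y = γ ^ 2 * (y ⬝ᵥ v + y ⬝ᵥ (S *ᵥ y)) := by
          field_simp at hdot ⊢; linarith
        nlinarith
      linarith
    have hMPv0 : (M * P) *ᵥ v = 0 := by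
      rw [← hMPpsd.dotProduct_mulVec_zero_iff v]
      simpa using hzero
    have hPy : P *ᵥ y = 0 := by
      rw [hy, Matrix.mulVec_mulVec, ← hMP, hMPv0]
    have hy0 : y = 0 := by
      by_contra hy0
      have := hγM.dotProduct_mulVec_pos hy0
      simp [hPy] at this
    rw [hy0] at hΔv'
    simp at hΔv'
    exact hvne hΔv'
  -- key: Δᵀ * M = M * Δ
  have hkey : Δᵀ * M = M * Δ := by
    have hSsymm : Sᵀ = S := by
      rw [hS, Matrix.transpose_mul, Matrix.transpose_mul, Matrix.transpose_transpose,
        Matrix.transpose_nonsing_inv, hRsymm, Matrix.mul_assoc]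
    have hΔT : Δᵀ = 1 + M * S - (γ ^ 2)⁻¹ • M := by
      rw [hΔ, Matrix.transpose_sub, Matrix.transpose_add, Matrix.transpose_one,
        Matrix.transpose_smul, hMsymm, show B * R⁻¹ * Bᵀ * M = S * M from rfl,
        Matrix.transpose_mul, hSsymm, hMsymm]
    rw [hΔT, hΔ]
    simp only [Matrix.sub_mul, Matrix.mul_sub, Matrix.add_mul, Matrix.mul_add,
      Matrix.one_mul, Matrix.mul_one, Matrix.smul_mul, Matrix.mul_smul, Matrix.mul_assoc]
  -- conclude
  have h2 : M * Δ⁻¹ = (Δ⁻¹)ᵀ * M := by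
    have h1 : (Δ⁻¹)ᵀ * Δᵀ = 1 := by
      rw [← Matrix.transpose_mul, Matrix.mul_nonsing_inv _ hdet, Matrix.transpose_one]
    calc M * Δ⁻¹ = ((Δ⁻¹)ᵀ * Δᵀ) * (M * Δ⁻¹) := by rw [h1, Matrix.one_mul]
      _ = (Δ⁻¹)ᵀ * ((Δᵀ * M) * Δ⁻¹) := by simp only [Matrix.mul_assoc]
      _ = (Δ⁻¹)ᵀ * (M * (Δ * Δ⁻¹)) := by rw [hkey, Matrix.mul_assoc]
      _ = (Δ⁻¹)ᵀ * M := by rw [Matrix.mul_nonsing_inv _ hdet, Matrix.mul_one]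
  refine ⟨?_, h2⟩
  rw [Matrix.transpose_mul, hMsymm]
  exact h2
end

section
/- Let γ ≥ γ' > 0 and suppose γ'²I − M ≻ 0 with M symmetric PSD and R symmetric positive definite. Then for every x ∈ ℝ^d, xᵀAᵀMΔ_γ⁻¹Ax ≤ xᵀAᵀMΔ_{γ'}⁻¹Ax, where Δ_γ = I + BR⁻¹BᵀM − γ⁻²M; i.e., the one-step saddle-point value is monotone nonincreasing in the attenuation parameter γ. -/
open Matrix

lemma quad_conj {n : ℕ} (N K : Matrix (Fin n) (Fin n) ℝ) (x : Fin n → ℝ) :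
    x ⬝ᵥ (Nᵀ * K * N) *ᵥ x = (N *ᵥ x) ⬝ᵥ K *ᵥ (N *ᵥ x) := by
  rw [← mulVec_mulVec, ← mulVec_mulVec, dotProduct_mulVec, vecMul_transpose]

open scoped MatrixOrder in
lemma psd_symm_sqrt {n : ℕ} {Q : Matrix (Fin n) (Fin n) ℝ} (hQ : Q.PosSemidef) :
    ∃ V : Matrix (Fin n) (Fin n) ℝ, Vᵀ = V ∧ V * V = Q := by
  obtain ⟨X, hX, -, hXX⟩ := CFC.exists_sqrt_of_isSelfAdjoint_of_quasispectrumRestricts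
    hQ.isHermitian (QuasispectrumRestricts.nnreal_of_nonneg hQ.nonneg)
  refine ⟨X, ?_, hXX⟩
  have h := hX.star_eq
  rwa [star_eq_conjTranspose, conjTranspose_eq_transpose_of_trivial] at h

lemma exists_symm_sqrt {n : ℕ} {Q : Matrix (Fin n) (Fin n) ℝ} (hQ : Q.PosDef) :
    ∃ V : Matrix (Fin n) (Fin n) ℝ, Vᵀ = V ∧ V * V = Q ∧ IsUnit V.det := by
  obtain ⟨V, hVs, hV2⟩ := psd_symm_sqrt hQ.posSemidef
  refine ⟨V, hVs, hV2, ?_⟩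
  have h2 : V.det * V.det = Q.det := by
    rw [← det_mul, hV2]
  refine isUnit_iff_ne_zero.mpr fun h0 => ?_
  rw [h0, mul_zero] at h2; exact (h2 ▸ hQ.det_pos).false

lemma inv_antitone_aux {n : ℕ} {P Q : Matrix (Fin n) (Fin n) ℝ}
    (hP : P.PosDef) (hQ : Q.PosDef)
    (h : ∀ x, x ⬝ᵥ P *ᵥ x ≤ x ⬝ᵥ Q *ᵥ x) :
    ∀ x, x ⬝ᵥ Q⁻¹ *ᵥ x ≤ x ⬝ᵥ P⁻¹ *ᵥ x := by
  intro x
  obtain ⟨V, hVsymm, hV2, hVdet⟩ := exists_symm_sqrt hQ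
  have hPsymm : Pᵀ = P := hP.1
  have hVinvsymm : (V⁻¹)ᵀ = V⁻¹ := by rw [transpose_nonsing_inv, hVsymm]
  have hVVinv : V * V⁻¹ = 1 := mul_nonsing_inv V hVdet
  have hVinvV : V⁻¹ * V = 1 := nonsing_inv_mul V hVdet
  obtain ⟨X, hXdef⟩ : ∃ X, X = V⁻¹ * P * V⁻¹ := ⟨_, rfl⟩
  have hXsymm : Xᵀ = X := by
    rw [hXdef, transpose_mul, transpose_mul, hVinvsymm, hPsymm, Matrix.mul_assoc]
  have hX : X.PosDef := by
    refine PosDef.of_dotProduct_mulVec_pos hXsymm fun z hz => ?_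
    have hz' : V⁻¹ *ᵥ z ≠ 0 := by
      intro h0
      apply hz
      have h1 : (V * V⁻¹) *ᵥ z = V *ᵥ (V⁻¹ *ᵥ z) := (mulVec_mulVec _ _ _).symm
      rw [hVVinv, one_mulVec, h0, mulVec_zero] at h1
      exact h1
    have h2 := hP.dotProduct_mulVec_pos hz'
    rw [star_trivial] at h2
    have h3 : z ⬝ᵥ X *ᵥ z = (V⁻¹ *ᵥ z) ⬝ᵥ P *ᵥ (V⁻¹ *ᵥ z) := by
      rw [hXdef, show V⁻¹ * P * V⁻¹ = (V⁻¹)ᵀ * P * V⁻¹ by rw [hVinvsymm]]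
      exact quad_conj _ _ _
    rw [star_trivial, h3]
    exact h2
  have hXle : ∀ z, z ⬝ᵥ X *ᵥ z ≤ z ⬝ᵥ z := by
    intro z
    have h1 : z ⬝ᵥ X *ᵥ z = (V⁻¹ *ᵥ z) ⬝ᵥ P *ᵥ (V⁻¹ *ᵥ z) := by
      rw [hXdef, show V⁻¹ * P * V⁻¹ = (V⁻¹)ᵀ * P * V⁻¹ by rw [hVinvsymm]]
      exact quad_conj _ _ _
    have h2 : (V⁻¹ *ᵥ z) ⬝ᵥ Q *ᵥ (V⁻¹ *ᵥ z) = z ⬝ᵥ z := by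
      rw [show (V⁻¹*ᵥz) ⬝ᵥ Q *ᵥ (V⁻¹*ᵥz) = z ⬝ᵥ ((V⁻¹)ᵀ * Q * V⁻¹) *ᵥ z from (quad_conj _ _ _).symm, hVinvsymm, ← hV2,
        show V⁻¹ * (V * V) * V⁻¹ = (V⁻¹ * V) * (V * V⁻¹) by
          simp only [Matrix.mul_assoc], hVinvV, hVVinv, Matrix.one_mul, one_mulVec]
    calc z ⬝ᵥ X *ᵥ z = (V⁻¹ *ᵥ z) ⬝ᵥ P *ᵥ (V⁻¹ *ᵥ z) := h1
      _ ≤ (V⁻¹ *ᵥ z) ⬝ᵥ Q *ᵥ (V⁻¹ *ᵥ z) := h _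
      _ = z ⬝ᵥ z := h2
  obtain ⟨W, hWsymm, hW2, hWdet⟩ := exists_symm_sqrt hX
  have hWWinv : W * W⁻¹ = 1 := mul_nonsing_inv W hWdet
  have hWinvW : W⁻¹ * W = 1 := nonsing_inv_mul W hWdet
  have hWinvsymm : (W⁻¹)ᵀ = W⁻¹ := by rw [transpose_nonsing_inv, hWsymm]
  set z := V⁻¹ *ᵥ x with hzdef
  set y := W⁻¹ *ᵥ z with hydef
  have e1 : x ⬝ᵥ Q⁻¹ *ᵥ x = z ⬝ᵥ z := by
    have hq : Q⁻¹ = (V⁻¹)ᵀ * 1 * V⁻¹ := by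
      rw [hVinvsymm, Matrix.mul_one, ← hV2, Matrix.mul_inv_rev]
    rw [hq, quad_conj, ← hzdef, one_mulVec]
  have e2 : x ⬝ᵥ P⁻¹ *ᵥ x = z ⬝ᵥ X⁻¹ *ᵥ z := by
    have hPVXV : P = V * X * V := by
      rw [hXdef,
        show V * (V⁻¹ * P * V⁻¹) * V = (V * V⁻¹) * P * (V⁻¹ * V) by
          simp only [Matrix.mul_assoc], hVVinv, hVinvV, Matrix.one_mul, Matrix.mul_one]
    have hp : P⁻¹ = (V⁻¹)ᵀ * X⁻¹ * V⁻¹ := by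
      rw [hVinvsymm, hPVXV, Matrix.mul_inv_rev, Matrix.mul_inv_rev, Matrix.mul_assoc]
    rw [hp, quad_conj, ← hzdef]
  have e3 : z ⬝ᵥ X⁻¹ *ᵥ z = y ⬝ᵥ y := by
    have hx : X⁻¹ = (W⁻¹)ᵀ * 1 * W⁻¹ := by
      rw [hWinvsymm, Matrix.mul_one, ← hW2, Matrix.mul_inv_rev]
    rw [hx, quad_conj, ← hydef, one_mulVec]
  have e4 : y ⬝ᵥ X *ᵥ y = z ⬝ᵥ z := by
    have hWy : W *ᵥ y = z := by
      rw [hydef, mulVec_mulVec, hWWinv, one_mulVec]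
    rw [show X = Wᵀ * 1 * W by rw [hWsymm, Matrix.mul_one, hW2], quad_conj, hWy, one_mulVec]
  rw [e1, e2, e3, ← e4]
  exact hXle y

lemma key_reduction {n : ℕ} (S G M Δ K : Matrix (Fin n) (Fin n) ℝ) (c : ℝ)
    (hS : S * S = M)
    (hΔ : Δ = 1 + G * M - c • M) (hK : K = 1 + S * G * S - c • M)
    (hKpd : K.PosDef) :
    M * Δ⁻¹ = S * K⁻¹ * S := by
  have hC : Δ = 1 + (G - c • 1) * M := by
    rw [hΔ, Matrix.sub_mul, Matrix.smul_mul, Matrix.one_mul, add_sub_assoc]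
  have hKC : K = 1 + S * (G - c • 1) * S := by
    rw [hK, Matrix.mul_sub, Matrix.sub_mul, Matrix.mul_smul, Matrix.mul_one,
      Matrix.smul_mul, hS, add_sub_assoc]
  have hdet : Δ.det = K.det := by
    rw [hC, hKC, show (1 : Matrix (Fin n) (Fin n) ℝ) + (G - c • 1) * M
        = 1 + ((G - c • 1) * S) * S by rw [Matrix.mul_assoc, hS],
      Matrix.det_one_add_mul_comm, ← Matrix.mul_assoc]
  have hKdet : IsUnit K.det := isUnit_iff_ne_zero.mpr hKpd.det_pos.ne'
  have hΔdet : IsUnit Δ.det := by rw [hdet]; exact hKdet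
  have hSΔ : S * Δ = K * S := by
    rw [hC, hKC]
    rw [Matrix.mul_add, Matrix.add_mul, Matrix.mul_one, Matrix.one_mul, ← hS]
    simp only [Matrix.mul_assoc]
  have h1 : S * Δ⁻¹ = K⁻¹ * S := by
    have h2 : K⁻¹ * (S * Δ) * Δ⁻¹ = K⁻¹ * (K * S) * Δ⁻¹ := by rw [hSΔ]
    rw [show K⁻¹ * (S * Δ) * Δ⁻¹ = K⁻¹ * S * (Δ * Δ⁻¹) by simp only [Matrix.mul_assoc],
      mul_nonsing_inv Δ hΔdet, Matrix.mul_one,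
      show K⁻¹ * (K * S) * Δ⁻¹ = (K⁻¹ * K) * (S * Δ⁻¹) by simp only [Matrix.mul_assoc],
      nonsing_inv_mul K hKdet, Matrix.one_mul] at h2
    rw [← h2]
  rw [← hS, Matrix.mul_assoc, h1, ← Matrix.mul_assoc]

theorem value_monotone_in_gamma (d m : ℕ)
    (A : Matrix (Fin d) (Fin d) ℝ) (B : Matrix (Fin d) (Fin m) ℝ)
    (M : Matrix (Fin d) (Fin d) ℝ) (hM : M.PosSemidef)
    (R : Matrix (Fin m) (Fin m) ℝ) (hR : R.PosDef)
    (γ γ' : ℝ) (hγ' : 0 < γ') (hγγ' : γ' ≤ γ)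
    (hγ'M : (γ' ^ 2 • (1 : Matrix (Fin d) (Fin d) ℝ) - M).PosDef)
    (Δγ Δγ' : Matrix (Fin d) (Fin d) ℝ)
    (hΔγ : Δγ = (1 : Matrix (Fin d) (Fin d) ℝ) + B * R⁻¹ * Bᵀ * M - (γ ^ 2)⁻¹ • M)
    (hΔγ' : Δγ' = (1 : Matrix (Fin d) (Fin d) ℝ) + B * R⁻¹ * Bᵀ * M - (γ' ^ 2)⁻¹ • M) :
    ∀ x : Fin d → ℝ,
      x ⬝ᵥ (Aᵀ * M * Δγ⁻¹ * A).mulVec x ≤ x ⬝ᵥ (Aᵀ * M * Δγ'⁻¹ * A).mulVec x := by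
  intro x
  obtain ⟨S, hSsymm, hS2, -⟩ : ∃ S : Matrix (Fin d) (Fin d) ℝ,
      Sᵀ = S ∧ S * S = M ∧ True :=
    (psd_symm_sqrt hM).imp fun S h => ⟨h.1, h.2, trivial⟩
  obtain ⟨G, hGdef⟩ : ∃ G : Matrix (Fin d) (Fin d) ℝ, G = B * R⁻¹ * Bᵀ := ⟨_, rfl⟩
  rw [← hGdef] at hΔγ hΔγ'
  have hRsymm : Rᵀ = R := hR.1
  have hGsymm : Gᵀ = G := by
    rw [hGdef, Matrix.transpose_mul, Matrix.transpose_mul, transpose_transpose,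
      show (R⁻¹)ᵀ = R⁻¹ by rw [transpose_nonsing_inv, hRsymm], Matrix.mul_assoc]
  have hGpsd : G.PosSemidef := by
    rw [hGdef, show B * R⁻¹ * Bᵀ = B * R⁻¹ * Bᴴ from rfl]
    exact hR.inv.posSemidef.mul_mul_conjTranspose_same B
  have hMsymm : Mᵀ = M := hM.1
  have hMnn : ∀ z : Fin d → ℝ, 0 ≤ z ⬝ᵥ M *ᵥ z := fun z => by
    have h := hM.dotProduct_mulVec_nonneg z; rwa [star_trivial] at h
  have hGnn : ∀ z : Fin d → ℝ, 0 ≤ z ⬝ᵥ G *ᵥ z := fun z => by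
    have h := hGpsd.dotProduct_mulVec_nonneg z; rwa [star_trivial] at h
  obtain ⟨Kγ, hKγdef⟩ : ∃ K : Matrix (Fin d) (Fin d) ℝ,
      K = 1 + S * G * S - (γ ^ 2)⁻¹ • M := ⟨_, rfl⟩
  obtain ⟨Kγ', hKγ'def⟩ : ∃ K : Matrix (Fin d) (Fin d) ℝ,
      K = 1 + S * G * S - (γ' ^ 2)⁻¹ • M := ⟨_, rfl⟩
  have hSGS : ∀ z : Fin d → ℝ, z ⬝ᵥ (S * G * S) *ᵥ z = (S *ᵥ z) ⬝ᵥ G *ᵥ (S *ᵥ z) := by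
    intro z
    rw [show S * G * S = Sᵀ * G * S by rw [hSsymm], quad_conj]
  have hquadK : ∀ (c : ℝ) (z : Fin d → ℝ),
      z ⬝ᵥ ((1 : Matrix (Fin d) (Fin d) ℝ) + S * G * S - c • M) *ᵥ z
        = z ⬝ᵥ z + (S *ᵥ z) ⬝ᵥ G *ᵥ (S *ᵥ z) - c * (z ⬝ᵥ M *ᵥ z) := by
    intro c z
    rw [sub_mulVec, add_mulVec, one_mulVec, dotProduct_sub, dotProduct_add,
      smul_mulVec, dotProduct_smul, smul_eq_mul, hSGS]
  have hγ'2pos : 0 < γ' ^ 2 := by positivity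
  have hγ'quad : ∀ z : Fin d → ℝ, z ≠ 0 → z ⬝ᵥ M *ᵥ z < γ' ^ 2 * (z ⬝ᵥ z) := by
    intro z hz
    have h := hγ'M.dotProduct_mulVec_pos hz
    rw [star_trivial, sub_mulVec, smul_mulVec, one_mulVec, dotProduct_sub,
      dotProduct_smul, smul_eq_mul] at h
    linarith
  have hKγ'pd : Kγ'.PosDef := by
    refine PosDef.of_dotProduct_mulVec_pos ?_ fun z hz => ?_
    · show Kγ'ᵀ = Kγ'
      rw [hKγ'def, transpose_sub, transpose_add, transpose_one, transpose_smul, hMsymm,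
        Matrix.transpose_mul, Matrix.transpose_mul, hSsymm, hGsymm, Matrix.mul_assoc,
        ← Matrix.mul_assoc]
    · rw [star_trivial, hKγ'def, hquadK]
      have h1 := hγ'quad z hz
      have h2 := hGnn (S *ᵥ z)
      have h3 : (γ' ^ 2)⁻¹ * (γ' ^ 2) = 1 := inv_mul_cancel₀ hγ'2pos.ne'
      have h4 : (γ' ^ 2)⁻¹ * (z ⬝ᵥ M *ᵥ z) < z ⬝ᵥ z := by
        have h5 := mul_lt_mul_of_pos_left h1 (inv_pos.mpr hγ'2pos)
        rwa [← mul_assoc, h3, one_mul] at h5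
      linarith
  have hcc : (γ ^ 2)⁻¹ ≤ (γ' ^ 2)⁻¹ := by
    have h1 : γ' ^ 2 ≤ γ ^ 2 := by nlinarith
    exact inv_anti₀ hγ'2pos h1
  have hle : ∀ z : Fin d → ℝ, z ⬝ᵥ Kγ' *ᵥ z ≤ z ⬝ᵥ Kγ *ᵥ z := by
    intro z
    rw [hKγdef, hKγ'def, hquadK, hquadK]
    have h := hMnn z
    nlinarith
  have hKγpd : Kγ.PosDef := by
    refine PosDef.of_dotProduct_mulVec_pos ?_ fun z hz => ?_
    · show Kγᵀ = Kγ
      rw [hKγdef, transpose_sub, transpose_add, transpose_one, transpose_smul, hMsymm,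
        Matrix.transpose_mul, Matrix.transpose_mul, hSsymm, hGsymm, Matrix.mul_assoc,
        ← Matrix.mul_assoc]
    · rw [star_trivial]
      calc (0:ℝ) < z ⬝ᵥ Kγ' *ᵥ z := by
            have h := hKγ'pd.dotProduct_mulVec_pos hz; rwa [star_trivial] at h
        _ ≤ z ⬝ᵥ Kγ *ᵥ z := hle z
  have hred : M * Δγ⁻¹ = S * Kγ⁻¹ * S :=
    key_reduction S G M Δγ Kγ _ hS2 hΔγ hKγdef hKγpd
  have hred' : M * Δγ'⁻¹ = S * Kγ'⁻¹ * S :=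
    key_reduction S G M Δγ' Kγ' _ hS2 hΔγ' hKγ'def hKγ'pd
  have goal1 : x ⬝ᵥ (Aᵀ * M * Δγ⁻¹ * A) *ᵥ x
      = ((S * A) *ᵥ x) ⬝ᵥ Kγ⁻¹ *ᵥ ((S * A) *ᵥ x) := by
    rw [show Aᵀ * M * Δγ⁻¹ * A = Aᵀ * (M * Δγ⁻¹) * A by simp only [Matrix.mul_assoc],
      hred,
      show Aᵀ * (S * Kγ⁻¹ * S) * A = (S * A)ᵀ * Kγ⁻¹ * (S * A) by
        rw [Matrix.transpose_mul, hSsymm]; simp only [Matrix.mul_assoc],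
      quad_conj]
  have goal2 : x ⬝ᵥ (Aᵀ * M * Δγ'⁻¹ * A) *ᵥ x
      = ((S * A) *ᵥ x) ⬝ᵥ Kγ'⁻¹ *ᵥ ((S * A) *ᵥ x) := by
    rw [show Aᵀ * M * Δγ'⁻¹ * A = Aᵀ * (M * Δγ'⁻¹) * A by simp only [Matrix.mul_assoc],
      hred',
      show Aᵀ * (S * Kγ'⁻¹ * S) * A = (S * A)ᵀ * Kγ'⁻¹ * (S * A) by
        rw [Matrix.transpose_mul, hSsymm]; simp only [Matrix.mul_assoc],
      quad_conj]
  rw [show (Aᵀ * M * Δγ⁻¹ * A).mulVec x = (Aᵀ * M * Δγ⁻¹ * A) *ᵥ x from rfl,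
    show (Aᵀ * M * Δγ'⁻¹ * A).mulVec x = (Aᵀ * M * Δγ'⁻¹ * A) *ᵥ x from rfl]
  rw [goal1, goal2]
  exact inv_antitone_aux hKγ'pd hKγpd hle ((S * A) *ᵥ x)
end
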